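/- arXiv:1101.2069 — 5 statements merged into one kernel-verified Lean document; each statement's English description precedes it below -/
import Mathlib

section
/- Let V be a real vector space of dimension n ≥ 2, let σ : V × V → V be a symmetric bilinear map, and let f : Ω → ℝ be a function on a nonempty open cone Ω ⊆ V with f(c·v) = c·f(v) for all c > 0 and v ∈ Ω with c·v ∈ Ω. If σ(v, v) = f(v)·v for all v ∈ Ω, then there exists a linear functional φ on V such that f(v) = φ(v) for all v in some nonempty open subset of Ω, and σ(v,v) = φ(v)·v there. -/
open Module

private lemma cubic_coeff_zero {V : Type*} [AddCommGroup V] [Module ℝ V]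
    (a b c : V) (ε : ℝ) (hε : 0 < ε)
    (h : ∀ t : ℝ, |t| < ε → t • a + t ^ 2 • b + t ^ 3 • c = 0) :
    a = 0 ∧ b = 0 := by
  -- divide out t
  have h' : ∀ t : ℝ, 0 < t → t < ε → a + t • b + t ^ 2 • c = 0 := by
    intro t ht htε
    have habs : |t| < ε := by rw [abs_of_pos ht]; exact htε
    have := h t habs
    have h2 : t • (a + t • b + t ^ 2 • c) = 0 := by
      rw [← this]; module
    rcases smul_eq_zero.mp h2 with h3 | h3
    · exact absurd h3 (ne_of_gt ht)
    · exact h3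
  set t1 := ε / 2 with ht1
  set t2 := ε / 3 with ht2
  set t3 := ε / 4 with ht3
  have e1 := h' t1 (by positivity) (by rw [ht1]; linarith)
  have e2 := h' t2 (by positivity) (by rw [ht2]; linarith)
  have e3 := h' t3 (by positivity) (by rw [ht3]; linarith)
  -- subtract to eliminate a
  have d1 : (t1 - t2) • b + (t1 ^ 2 - t2 ^ 2) • c = 0 := by
    rw [← sub_eq_zero] at *
    linear_combination (norm := module) e1 - e2
  have d2 : (t2 - t3) • b + (t2 ^ 2 - t3 ^ 2) • c = 0 := by
    rw [← sub_eq_zero] at *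
    linear_combination (norm := module) e2 - e3
  have hne12 : t1 - t2 ≠ 0 := by rw [ht1, ht2]; intro h0; nlinarith
  have hne23 : t2 - t3 ≠ 0 := by rw [ht2, ht3]; intro h0; nlinarith
  have d1' : b + (t1 + t2) • c = 0 := by
    have : (t1 - t2) • (b + (t1 + t2) • c) = 0 := by
      rw [← d1]; module
    rcases smul_eq_zero.mp this with h3 | h3
    · exact absurd h3 hne12
    · exact h3
  have d2' : b + (t2 + t3) • c = 0 := by
    have : (t2 - t3) • (b + (t2 + t3) • c) = 0 := by
      rw [← d2]; module
    rcases smul_eq_zero.mp this with h3 | h3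
    · exact absurd h3 hne23
    · exact h3
  have hc : c = 0 := by
    have hd : (t1 - t3) • c = 0 := by
      rw [← sub_eq_zero] at d1' d2'
      linear_combination (norm := module) d1' - d2'
    have hne13 : t1 - t3 ≠ 0 := by rw [ht1, ht3]; intro h0; nlinarith
    rcases smul_eq_zero.mp hd with h3 | h3
    · exact absurd h3 hne13
    · exact h3
  have hb : b = 0 := by
    have := d1'
    rw [hc, smul_zero, add_zero] at this
    exact this
  have ha : a = 0 := by
    have := h' t1 (by positivity) (by rw [ht1]; linarith)
    rw [hb, hc, smul_zero, smul_zero, add_zero, add_zero] at this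
    exact this
  exact ⟨ha, hb⟩

/-- if a symmetric bilinear map satisfies `σ(v,v) = f(v)·v` on an open cone
with `f` positively 1-homogeneous, then `f` is linear on some nonempty open subset. -/
theorem homogeneous_quadratic_proportional_implies_locally_linear
    {V : Type*} [NormedAddCommGroup V] [NormedSpace ℝ V] [FiniteDimensional ℝ V]
    (hdim : 2 ≤ finrank ℝ V)
    (σ : V →ₗ[ℝ] V →ₗ[ℝ] V) (hσsym : ∀ u v, σ u v = σ v u)
    (Ω : Set V) (hΩopen : IsOpen Ω) (hΩne : Ω.Nonempty)
    (hΩcone : ∀ c : ℝ, 0 < c → ∀ v ∈ Ω, c • v ∈ Ω)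
    (f : V → ℝ)
    (hhom : ∀ c : ℝ, 0 < c → ∀ v ∈ Ω, c • v ∈ Ω → f (c • v) = c * f v)
    (heq : ∀ v ∈ Ω, σ v v = f v • v) :
    ∃ φ : V →ₗ[ℝ] ℝ, ∃ Ω' : Set V, Ω' ⊆ Ω ∧ IsOpen Ω' ∧ Ω'.Nonempty ∧
      ∀ v ∈ Ω', f v = φ v ∧ σ v v = φ v • v := by
  classical
  have hnt : Nontrivial V := by
    have : 0 < finrank ℝ V := by omega
    exact Module.nontrivial_of_finrank_pos this
  -- find a nonzero point of Ω
  obtain ⟨v₀, hv₀Ω, hv₀⟩ : ∃ v₀ ∈ Ω, v₀ ≠ 0 := by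
    obtain ⟨w₀, hw₀⟩ := hΩne
    by_cases h : w₀ = 0
    · subst h
      obtain ⟨ε, hε, hball⟩ := Metric.isOpen_iff.mp hΩopen 0 hw₀
      obtain ⟨u, hu⟩ := exists_ne (0 : V)
      refine ⟨(ε / (2 * ‖u‖)) • u, hball ?_, ?_⟩
      · rw [Metric.mem_ball, dist_zero_right, norm_smul]
        have hun : 0 < ‖u‖ := norm_pos_iff.mpr hu
        rw [Real.norm_eq_abs, abs_of_pos (by positivity)]
        have hc : ε / (2 * ‖u‖) * ‖u‖ = ε / 2 := by field_simp
        rw [hc]; linarith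
      · have hun : 0 < ‖u‖ := norm_pos_iff.mpr hu
        exact smul_ne_zero (by positivity) hu
    · exact ⟨w₀, hw₀, h⟩
  -- dual functional with ψ v₀ = 1
  obtain ⟨ψ', hψ'norm, hψ'v₀⟩ := exists_dual_vector ℝ v₀ (norm_ne_zero_iff.mpr hv₀)
  set ψ : V →L[ℝ] ℝ := ‖v₀‖⁻¹ • ψ' with hψdef
  have hψv₀ : ψ v₀ = 1 := by
    simp [hψdef, hψ'v₀]
    rw [inv_mul_cancel₀ (norm_ne_zero_iff.mpr hv₀)]
  set q : ℝ := f v₀ with hq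
  have hS : σ v₀ v₀ = q • v₀ := heq v₀ hv₀Ω
  have hqS : ψ (σ v₀ v₀) = q := by rw [hS, map_smul, hψv₀, smul_eq_mul, mul_one]
  -- the fundamental identity on Ω
  have hE : ∀ v ∈ Ω, ψ v • σ v v = ψ (σ v v) • v := by
    intro v hv
    rw [heq v hv, map_smul, smul_smul, smul_eq_mul]
    ring_nf
  -- key identities for all w
  have key : ∀ w : V,
      (2 : ℝ) • σ v₀ w = (2 * ψ (σ v₀ w) - q * ψ w) • v₀ + q • w ∧
      σ w w = (ψ (σ w w) - ψ w * (2 * ψ (σ v₀ w) - q * ψ w)) • v₀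
        + (2 * ψ (σ v₀ w) - q * ψ w) • w := by
    intro w
    -- get ε such that v₀ + t w ∈ Ω for |t| < ε
    have hcont : Continuous (fun t : ℝ => v₀ + t • w) := by continuity
    have hmem : (fun t : ℝ => v₀ + t • w) ⁻¹' Ω ∈ nhds (0 : ℝ) := by
      apply (hΩopen.preimage hcont).mem_nhds
      simp [hv₀Ω]
    obtain ⟨ε, hε, hball⟩ := Metric.mem_nhds_iff.mp hmem
    set A : V := (2 : ℝ) • σ v₀ w + ψ w • σ v₀ v₀ - (2 * ψ (σ v₀ w)) • v₀ - q • w with hA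
    set B : V := σ w w + (2 * ψ w) • σ v₀ w - ψ (σ w w) • v₀ - (2 * ψ (σ v₀ w)) • w with hB
    set C : V := ψ w • σ w w - ψ (σ w w) • w with hC
    have hcoef : ∀ t : ℝ, |t| < ε → t • A + t ^ 2 • B + t ^ 3 • C = 0 := by
      intro t ht
      have hmemt : v₀ + t • w ∈ Ω := hball (by simpa [Real.dist_eq] using ht)
      have h0 := hE (v₀ + t • w) hmemt
      simp only [map_add, map_smul, LinearMap.add_apply, LinearMap.smul_apply,
        smul_eq_mul] at h0
      rw [hσsym w v₀, hψv₀, hqS] at h0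
      rw [hA, hB, hC, ← sub_eq_zero]
      rw [← sub_eq_zero] at h0
      have hS' : σ v₀ v₀ - q • v₀ = 0 := by rw [hS]; simp
      linear_combination (norm := module) h0 - hS'
    obtain ⟨hA0, hB0⟩ := cubic_coeff_zero A B C ε hε hcoef
    rw [hA] at hA0
    rw [hB] at hB0
    constructor
    · rw [← sub_eq_zero]
      have hS' : σ v₀ v₀ - q • v₀ = 0 := by rw [hS]; simp
      linear_combination (norm := module) hA0 - (ψ w) • hS'
    · have hT : (2 : ℝ) • σ v₀ w = (2 * ψ (σ v₀ w) - q * ψ w) • v₀ + q • w := by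
        rw [← sub_eq_zero]
        rw [← sub_eq_zero] at hA0
        have hS' : σ v₀ v₀ - q • v₀ = 0 := by rw [hS]; simp
        linear_combination (norm := module) hA0 - (ψ w) • hS'
      rw [← sub_eq_zero]
      rw [← sub_eq_zero] at hB0 hT
      linear_combination (norm := module) hB0 - (ψ w) • hT
  -- the linear functional
  set φ : V →ₗ[ℝ] ℝ :=
    (2 : ℝ) • (ψ.toLinearMap.comp (σ v₀)) - q • ψ.toLinearMap with hφdef
  have hφ : ∀ w, φ w = 2 * ψ (σ v₀ w) - q * ψ w := by
    intro w
    simp [hφdef, mul_comm]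
  -- the open set
  set L : Submodule ℝ V := Submodule.span ℝ {v₀} with hL
  set Ω' : Set V := Ω \ (L : Set V) with hΩ'
  have hLclosed : IsClosed (L : Set V) := Submodule.closed_of_finiteDimensional L
  refine ⟨φ, Ω', Set.diff_subset, hΩopen.sdiff hLclosed, ?_, ?_⟩
  · -- nonempty
    obtain ⟨u, hu⟩ : ∃ u : V, u ∉ L := by
      by_contra h
      push_neg at h
      have : L = ⊤ := by
        apply Submodule.eq_top_iff'.mpr h
      have h1 : finrank ℝ V = finrank ℝ L := by
        rw [this]; exact (finrank_top ℝ V).symm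
      have h2 : finrank ℝ L = 1 := finrank_span_singleton hv₀
      omega
    obtain ⟨ε, hε, hball⟩ := Metric.isOpen_iff.mp hΩopen v₀ hv₀Ω
    have hun : 0 < ‖u‖ := norm_pos_iff.mpr (by rintro rfl; exact hu (Submodule.zero_mem L))
    set δ : ℝ := ε / (2 * ‖u‖) with hδ
    have hδpos : 0 < δ := by positivity
    refine ⟨v₀ + δ • u, ?_, ?_⟩
    · apply hball
      rw [Metric.mem_ball, dist_eq_norm]
      simp only [add_sub_cancel_left]
      rw [norm_smul, Real.norm_eq_abs, abs_of_pos hδpos, hδ]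
      have hc : ε / (2 * ‖u‖) * ‖u‖ = ε / 2 := by field_simp
      rw [hc]; linarith
    · intro hmem
      have hv₀L : v₀ ∈ L := Submodule.mem_span_singleton_self v₀
      have : δ • u ∈ L := by
        have := Submodule.sub_mem L hmem hv₀L
        simpa using this
      have : u ∈ L := by
        have h2 := Submodule.smul_mem L δ⁻¹ this
        rwa [smul_smul, inv_mul_cancel₀ (ne_of_gt hδpos), one_smul] at h2
      exact hu this
  · -- the main property
    intro v hv
    obtain ⟨hvΩ, hvL⟩ := hv
    have hkey := (key v).2
    have heqv := heq v hvΩ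
    have hmain : (f v - φ v) • v =
        (ψ (σ v v) - ψ v * (2 * ψ (σ v₀ v) - q * ψ v)) • v₀ := by
      rw [← sub_eq_zero]
      rw [← sub_eq_zero] at hkey
      rw [hφ v]
      rw [← sub_eq_zero] at heqv
      linear_combination (norm := module) hkey - heqv
    have hfφ : f v = φ v := by
      by_contra hne
      apply hvL
      rw [hL, SetLike.mem_coe, Submodule.mem_span_singleton]
      have hne' : f v - φ v ≠ 0 := sub_ne_zero.mpr hne
      refine ⟨(f v - φ v)⁻¹ * (ψ (σ v v) - ψ v * (2 * ψ (σ v₀ v) - q * ψ v)), ?_⟩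
      rw [mul_smul, ← hmain, smul_smul, inv_mul_cancel₀ hne', one_smul]
    exact ⟨hfφ, by rw [← hfφ]; exact heqv⟩
end

section
/- Two symmetric affine connections Γ and Γ̄ on an open set U ⊆ ℝⁿ (n ≥ 2) have the same unparameterized geodesics (in the sense that every curve satisfying γ̈ᵃ + Γᵃ_{bc} γ̇ᵇ γ̇ᶜ ∥ γ̇ᵃ also satisfies γ̈ᵃ + Γ̄ᵃ_{bc} γ̇ᵇ γ̇ᶜ ∥ γ̇ᵃ for velocities in an open cone at every point) if and only if there is a 1-form φ with Γ̄ᵃ_{bc} = Γᵃ_{bc} + δᵃ_b φ_c + δᵃ_c φ_b. In particular, the difference tensor Γ̃ = Γ̄ − Γ satisfies Γ̃ᵃ_{bc} vᵇ vᶜ = f̃(v) vᵃ for some function f̃ which is then necessarily of the form f̃(v) = 2φ_b vᵇ. -/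
open scoped BigOperators

/-- Kronecker delta as a real number: `ind i j = 1` if `j = i`, else `0`. -/
noncomputable def geoInd {n : ℕ} (i j : Fin n) : ℝ := if j = i then 1 else 0

lemma geo_sum_mul_ind {n : ℕ} (g : Fin n → ℝ) (s t u : ℝ) (b c d : Fin n) :
    ∑ j, g j * (s * geoInd b j + t * geoInd c j + u * geoInd d j)
      = s * g b + t * g c + u * g d := by
  simp [geoInd, mul_add, Finset.sum_add_distrib, mul_ite, mul_comm, Finset.sum_ite_eq]

lemma geo_Qexpand {n : ℕ} (D : Fin n → Fin n → Fin n → ℝ) (a : Fin n) (s t u : ℝ)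
    (b c d : Fin n) :
    (∑ p, ∑ q, D a p q * (s * geoInd b p + t * geoInd c p + u * geoInd d p)
        * (s * geoInd b q + t * geoInd c q + u * geoInd d q))
    = s * (s * D a b b + t * D a b c + u * D a b d)
      + t * (s * D a c b + t * D a c c + u * D a c d)
      + u * (s * D a d b + t * D a d c + u * D a d d) := by
  have h1 : ∀ p, ∑ q, D a p q * (s * geoInd b p + t * geoInd c p + u * geoInd d p)
        * (s * geoInd b q + t * geoInd c q + u * geoInd d q)
      = (s * (D a p b) + t * (D a p c) + u * (D a p d))
          * (s * geoInd b p + t * geoInd c p + u * geoInd d p) := by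
    intro p
    rw [← geo_sum_mul_ind (fun q => D a p q) s t u b c d, Finset.sum_mul]
    congr 1; ext q; ring
  rw [Finset.sum_congr rfl (fun p _ => h1 p),
    geo_sum_mul_ind (fun p => s * D a p b + t * D a p c + u * D a p d) s t u b c d]

/-- two symmetric affine connections have the same unparameterized
geodesics (velocities ranging in a nonempty open cone at every point) if and only if
they are related by `Γ̄ᵃ_{bc} = Γᵃ_{bc} + δᵃ_b φ_c + δᵃ_c φ_b` for a 1-form `φ`;
in that case the difference tensor satisfies `Γ̃ᵃ_{bc} vᵇvᶜ = (2 φ_b vᵇ) vᵃ`. -/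
theorem same_unparameterized_geodesics_iff_projective_change
    {n : ℕ} (hn : 2 ≤ n)
    (U : Set (Fin n → ℝ)) (hUopen : IsOpen U) (hUne : U.Nonempty)
    (Γ Γbar : (Fin n → ℝ) → Fin n → Fin n → Fin n → ℝ)
    (hΓsym : ∀ x a b c, Γ x a b c = Γ x a c b)
    (hΓbarsym : ∀ x a b c, Γbar x a b c = Γbar x a c b)
    (Ω : (Fin n → ℝ) → Set (Fin n → ℝ))
    (hΩopen : ∀ x, IsOpen (Ω x)) (hΩne : ∀ x ∈ U, (Ω x).Nonempty)
    (hΩcone : ∀ x, ∀ c : ℝ, 0 < c → ∀ v ∈ Ω x, c • v ∈ Ω x) :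
    (∀ x ∈ U, ∀ v ∈ Ω x, ∀ w : Fin n → ℝ,
        (∃ r : ℝ, ∀ a, w a + ∑ b, ∑ c, Γ x a b c * v b * v c = r * v a) ↔
        (∃ r : ℝ, ∀ a, w a + ∑ b, ∑ c, Γbar x a b c * v b * v c = r * v a))
    ↔
    (∃ φ : (Fin n → ℝ) → Fin n → ℝ,
      (∀ x ∈ U, ∀ a b c, Γbar x a b c =
        Γ x a b c + (if a = b then φ x c else 0) + (if a = c then φ x b else 0)) ∧
      (∀ x ∈ U, ∀ v : Fin n → ℝ, ∀ a,
        ∑ b, ∑ c, (Γbar x a b c - Γ x a b c) * v b * v c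
          = (2 * ∑ b, φ x b * v b) * v a)) := by
  set D : (Fin n → ℝ) → Fin n → Fin n → Fin n → ℝ :=
    fun x a b c => Γbar x a b c - Γ x a b c with hDdef
  have hDsym : ∀ x a b c, D x a b c = D x a c b := by
    intro x a b c; simp only [hDdef]; rw [hΓsym, hΓbarsym]
  constructor
  · intro H
    set φ : (Fin n → ℝ) → Fin n → ℝ :=
      fun x b => (∑ e, (D x e b e + D x e e b)) / (2 * ((n : ℝ) + 1)) with hφdef
    have key : ∀ x ∈ U, ∀ a b c, D x a b c =
        (if a = b then φ x c else 0) + (if a = c then φ x b else 0) := by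
      intro x hx
      -- Step 1: the difference tensor is proportional to v on the cone
      have hQr : ∀ v ∈ Ω x, ∃ r : ℝ, ∀ a,
          (∑ b, ∑ c, D x a b c * v b * v c) = r * v a := by
        intro v hv
        obtain ⟨r, hr⟩ := (H x hx v hv
            (fun a => -(∑ b, ∑ c, Γ x a b c * v b * v c))).mp
          ⟨0, fun a => by simp⟩
        refine ⟨r, fun a => ?_⟩
        have := hr a
        simp only [hDdef, sub_mul, Finset.sum_sub_distrib]
        linarith
      -- Step 2: the antisymmetrized expression vanishes on the cone
      have hG0 : ∀ v ∈ Ω x, ∀ a e,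
          (∑ b, ∑ c, D x a b c * v b * v c) * v e
            - (∑ b, ∑ c, D x e b c * v b * v c) * v a = 0 := by
        intro v hv a e
        obtain ⟨r, hr⟩ := hQr v hv
        rw [hr a, hr e]; ring
      -- Step 3: analytic continuation to all of ℝⁿ
      obtain ⟨v₀, hv₀⟩ := hΩne x hx
      have hGall : ∀ (v : Fin n → ℝ) (a e : Fin n),
          (∑ b, ∑ c, D x a b c * v b * v c) * v e
            - (∑ b, ∑ c, D x e b c * v b * v c) * v a = 0 := by
        intro v a e
        have hproj : ∀ (b : Fin n) (z : Fin n → ℝ),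
            AnalyticAt ℝ (fun v : Fin n → ℝ => v b) z :=
          fun b z => (ContinuousLinearMap.proj (R := ℝ) (φ := fun _ : Fin n => ℝ) b).analyticAt z
        have hQa : ∀ (a : Fin n) (z : Fin n → ℝ),
            AnalyticAt ℝ (fun v : Fin n → ℝ => ∑ b, ∑ c, D x a b c * v b * v c) z := by
          intro a z
          apply Finset.analyticAt_fun_sum; intro b _
          apply Finset.analyticAt_fun_sum; intro c _
          exact (analyticAt_const.mul (hproj b z)).mul (hproj c z)
        have hEq : Set.EqOn (fun v : Fin n → ℝ =>
            (∑ b, ∑ c, D x a b c * v b * v c) * v e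
              - (∑ b, ∑ c, D x e b c * v b * v c) * v a) 0 Set.univ := by
          apply AnalyticOnNhd.eqOn_zero_of_preconnected_of_eventuallyEq_zero
            (fun z _ => ((hQa a z).mul (hproj e z)).sub ((hQa e z).mul (hproj a z)))
            isPreconnected_univ (Set.mem_univ v₀)
          filter_upwards [(hΩopen x).mem_nhds hv₀] with w hw using hG0 w hw a e
        simpa using hEq (Set.mem_univ v)
      -- Step 4: polarization
      have star : ∀ a e b c d : Fin n,
          (D x a b c + D x a c b) * geoInd d e + (D x a b d + D x a d b) * geoInd c e
            + (D x a c d + D x a d c) * geoInd b e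
          = (D x e b c + D x e c b) * geoInd d a + (D x e b d + D x e d b) * geoInd c a
            + (D x e c d + D x e d c) * geoInd b a := by
        intro a e b c d
        have h8 : ∀ s t u : ℝ,
            (s * (s * D x a b b + t * D x a b c + u * D x a b d)
              + t * (s * D x a c b + t * D x a c c + u * D x a c d)
              + u * (s * D x a d b + t * D x a d c + u * D x a d d))
              * (s * geoInd b e + t * geoInd c e + u * geoInd d e)
            - (s * (s * D x e b b + t * D x e b c + u * D x e b d)
              + t * (s * D x e c b + t * D x e c c + u * D x e c d)
              + u * (s * D x e d b + t * D x e d c + u * D x e d d))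
              * (s * geoInd b a + t * geoInd c a + u * geoInd d a) = 0 := by
          intro s t u
          have h := hGall (fun j => s * geoInd b j + t * geoInd c j + u * geoInd d j) a e
          rw [geo_Qexpand (D x) a s t u b c d, geo_Qexpand (D x) e s t u b c d] at h
          exact h
        linear_combination h8 1 1 1 - h8 1 1 0 - h8 1 0 1 - h8 0 1 1
          + h8 1 0 0 + h8 0 1 0 + h8 0 0 1
      -- Step 5: contraction
      have hcontr : ∀ a b c : Fin n,
          2 * ((n : ℝ) + 1) * D x a b c
            = (∑ e, (D x e b e + D x e e b)) * geoInd c a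
              + (∑ e, (D x e c e + D x e e c)) * geoInd b a := by
        intro a b c
        have hs : ∑ e, ((D x a b c + D x a c b) * geoInd e e
                + (D x a b e + D x a e b) * geoInd c e
                + (D x a c e + D x a e c) * geoInd b e)
            = ∑ e, ((D x e b c + D x e c b) * geoInd e a
                + (D x e b e + D x e e b) * geoInd c a
                + (D x e c e + D x e e c) * geoInd b a) :=
          Finset.sum_congr rfl (fun e _ => star a e b c e)
        have hL : ∑ e : Fin n, ((D x a b c + D x a c b) * geoInd e e
                + (D x a b e + D x a e b) * geoInd c e
                + (D x a c e + D x a e c) * geoInd b e)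
            = (n : ℝ) * (D x a b c + D x a c b)
              + (D x a b c + D x a c b) + (D x a c b + D x a b c) := by
          have t1 : ∑ e : Fin n, (D x a b c + D x a c b) * geoInd e e
              = (n : ℝ) * (D x a b c + D x a c b) := by
            have he : ∀ e : Fin n, (D x a b c + D x a c b) * geoInd e e
                = (D x a b c + D x a c b) := fun e => by simp [geoInd]
            rw [Finset.sum_congr rfl fun e _ => he e, Finset.sum_const,
              Finset.card_univ, Fintype.card_fin, nsmul_eq_mul]
          have t2 : ∑ e : Fin n, (D x a b e + D x a e b) * geoInd c e
              = D x a b c + D x a c b := by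
            simp [geoInd, mul_ite, Finset.sum_ite_eq]
          have t3 : ∑ e : Fin n, (D x a c e + D x a e c) * geoInd b e
              = D x a c b + D x a b c := by
            simp [geoInd, mul_ite, Finset.sum_ite_eq]
          simp only [Finset.sum_add_distrib]
          rw [t1, t2, t3]
        have hR : ∑ e : Fin n, ((D x e b c + D x e c b) * geoInd e a
                + (D x e b e + D x e e b) * geoInd c a
                + (D x e c e + D x e e c) * geoInd b a)
            = (D x a b c + D x a c b)
              + (∑ e, (D x e b e + D x e e b)) * geoInd c a
              + (∑ e, (D x e c e + D x e e c)) * geoInd b a := by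
          simp only [Finset.sum_add_distrib, ← Finset.sum_mul]
          congr 2
          simp [geoInd, mul_ite, Finset.sum_ite_eq']
        rw [hL, hR] at hs
        rw [← hDsym x a b c] at hs
        linear_combination hs
      -- conclude
      intro a b c
      have h := hcontr a b c
      have hne : (2 * ((n : ℝ) + 1)) ≠ 0 := by positivity
      have hite1 : (if a = b then φ x c else 0) = φ x c * geoInd b a := by
        simp only [geoInd, mul_ite, mul_one, mul_zero]
      have hite2 : (if a = c then φ x b else 0) = φ x b * geoInd c a := by
        simp only [geoInd, mul_ite, mul_one, mul_zero]
      rw [hite1, hite2, hφdef]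
      field_simp
      linarith
    refine ⟨φ, ?_, ?_⟩
    · intro x hx a b c
      have h := key x hx a b c
      simp only [hDdef] at h
      linarith
    · intro x hx v a
      have h : ∀ b c : Fin n, (Γbar x a b c - Γ x a b c) * v b * v c
          = ((if a = b then φ x c else 0) + (if a = c then φ x b else 0)) * v b * v c := by
        intro b c
        have := key x hx a b c
        simp only [hDdef] at this
        rw [this]
      calc ∑ b, ∑ c, (Γbar x a b c - Γ x a b c) * v b * v c
          = ∑ b, ∑ c, ((if a = b then φ x c else 0)
              + (if a = c then φ x b else 0)) * v b * v c := by
            exact Finset.sum_congr rfl fun b _ => Finset.sum_congr rfl fun c _ => h b c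
        _ = ∑ b, ∑ c, ((if a = b then φ x c * v b * v c else 0)
              + (if a = c then φ x b * v b * v c else 0)) := by
            refine Finset.sum_congr rfl fun b _ => Finset.sum_congr rfl fun c _ => ?_
            split <;> split <;> ring
        _ = (2 * ∑ b, φ x b * v b) * v a := by
            simp only [Finset.sum_add_distrib]
            have e1 : ∀ b : Fin n, ∑ c, (if a = b then φ x c * v b * v c else 0)
                = (if a = b then (∑ c, φ x c * v c) * v b else 0) := by
              intro b
              split
              · rw [Finset.sum_mul]
                exact Finset.sum_congr rfl fun c _ => by ring
              · simp
            have e2 : ∀ b : Fin n, ∑ c, (if a = c then φ x b * v b * v c else 0)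
                = φ x b * v b * v a := by
              intro b
              simp [Finset.sum_ite_eq]
            rw [Finset.sum_congr rfl fun b _ => e1 b, Finset.sum_congr rfl fun b _ => e2 b,
              Finset.sum_ite_eq, ← Finset.sum_mul]
            simp only [Finset.mem_univ, if_true]
            ring
  · rintro ⟨φ, h1, h2⟩ x hx v hv w
    have hsum : ∀ a, (∑ b, ∑ c, Γbar x a b c * v b * v c)
        = (∑ b, ∑ c, Γ x a b c * v b * v c) + (2 * ∑ b, φ x b * v b) * v a := by
      intro a
      have h := h2 x hx v a
      simp only [sub_mul, Finset.sum_sub_distrib] at h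
      linarith
    constructor
    · rintro ⟨r, hr⟩
      refine ⟨r + 2 * ∑ b, φ x b * v b, fun a => ?_⟩
      rw [hsum a]
      linear_combination hr a
    · rintro ⟨r, hr⟩
      refine ⟨r - 2 * ∑ b, φ x b * v b, fun a => ?_⟩
      have := hr a
      rw [hsum a] at this
      linear_combination this
end

section
/- Fix a point x₀ and suppose the pointwise at-x₀ equation Γ̃ᵃ_{bc} vᵇ vᶜ = f̃(v) vᵃ holds for all v in a nonempty open cone Ω ⊆ ℝⁿ, where Γ̃ is a symmetric (1,2)-tensor at x₀. Then there is a covector φ at x₀ such that Γ̃ᵃ_{bc} = δᵃ_b φ_c + δᵃ_c φ_b. -/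
open scoped BigOperators

/-- a symmetric (1,2)-tensor at a point satisfying
`Γ̃ᵃ_{bc} vᵇvᶜ = f̃(v) vᵃ` on a nonempty open cone is of the form
`Γ̃ᵃ_{bc} = δᵃ_b φ_c + δᵃ_c φ_b`. -/
theorem pointwise_difference_tensor_is_pure_trace
    {n : ℕ} (hn : 2 ≤ n)
    (Γt : Fin n → Fin n → Fin n → ℝ)
    (hsym : ∀ a b c, Γt a b c = Γt a c b)
    (Ω : Set (Fin n → ℝ)) (hΩopen : IsOpen Ω) (hΩne : Ω.Nonempty)
    (hΩcone : ∀ c : ℝ, 0 < c → ∀ v ∈ Ω, c • v ∈ Ω)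
    (f : (Fin n → ℝ) → ℝ)
    (heq : ∀ v ∈ Ω, ∀ a, ∑ b, ∑ c, Γt a b c * v b * v c = f v * v a) :
    ∃ φ : Fin n → ℝ, ∀ a b c,
      Γt a b c = (if a = b then φ c else 0) + (if a = c then φ b else 0) := by
  classical
  obtain ⟨v₀, hv₀⟩ := hΩne
  -- coordinate functions are analytic
  have hcoord : ∀ i : Fin n, AnalyticOnNhd ℝ (fun v : Fin n → ℝ => v i) Set.univ := by
    intro i
    exact (ContinuousLinearMap.proj i : (Fin n → ℝ) →L[ℝ] ℝ).analyticOnNhd Set.univ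
  have hQ : ∀ a : Fin n, AnalyticOnNhd ℝ
      (fun v : Fin n → ℝ => ∑ b, ∑ c, Γt a b c * v b * v c) Set.univ := by
    intro a
    apply Finset.analyticOnNhd_fun_sum
    intro b _
    apply Finset.analyticOnNhd_fun_sum
    intro c _
    exact ((analyticOnNhd_const.mul (hcoord b)).mul (hcoord c))
  -- the key polynomial identity, extended from Ω to all of ℝⁿ
  have key : ∀ (v : Fin n → ℝ) (a d : Fin n),
      (∑ b, ∑ c, Γt a b c * v b * v c) * v d
        = (∑ b, ∑ c, Γt d b c * v b * v c) * v a := by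
    intro v a d
    set g : (Fin n → ℝ) → ℝ := fun v =>
      (∑ b, ∑ c, Γt a b c * v b * v c) * v d
        - (∑ b, ∑ c, Γt d b c * v b * v c) * v a with hgdef
    have hganal : AnalyticOnNhd ℝ g Set.univ :=
      ((hQ a).mul (hcoord d)).sub ((hQ d).mul (hcoord a))
    have hzero : Set.EqOn g 0 Ω := by
      intro w hw
      simp only [hgdef, heq w hw a, heq w hw d, Pi.zero_apply]
      ring
    have hev : g =ᶠ[nhds v₀] 0 :=
      Filter.eventuallyEq_of_mem (hΩopen.mem_nhds hv₀) hzero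
    have := hganal.eqOn_zero_of_preconnected_of_eventuallyEq_zero
      isPreconnected_univ (Set.mem_univ v₀) hev (Set.mem_univ v)
    have hgv : g v = 0 := this
    simp only [hgdef] at hgv
    linarith
  -- evaluation of the quadratic form on vectors supported on two coordinates
  have pairsum : ∀ (A : Fin n → Fin n → ℝ) (v : Fin n → ℝ) (i j : Fin n), i ≠ j →
      (∀ b, b ≠ i → b ≠ j → v b = 0) →
      ∑ b, ∑ c, A b c * v b * v c
        = A i i * v i * v i + A i j * v i * v j + A j i * v j * v i + A j j * v j * v j := by
    intro A v i j hij hsupp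
    have h1 : ∀ (B : Fin n → ℝ), (∀ b, b ≠ i → b ≠ j → B b = 0) →
        ∑ b, B b = B i + B j := by
      intro B hB
      rw [← Finset.sum_subset (Finset.subset_univ ({i, j} : Finset (Fin n)))]
      · exact Finset.sum_pair hij
      · intro b _ hb
        simp only [Finset.mem_insert, Finset.mem_singleton, not_or] at hb
        exact hB b hb.1 hb.2
    rw [h1 (fun b => ∑ c, A b c * v b * v c) (by
      intro b hbi hbj
      simp [hsupp b hbi hbj])]
    rw [h1 (fun c => A i c * v i * v c) (by
      intro c hci hcj; simp [hsupp c hci hcj])]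
    rw [h1 (fun c => A j c * v j * v c) (by
      intro c hci hcj; simp [hsupp c hci hcj])]
    ring
  -- helper : values of the basis-like vectors
  set e : Fin n → (Fin n → ℝ) := fun i => Pi.single i 1 with he
  have singval : ∀ (i j : Fin n) (x y : ℝ) (b : Fin n),
      (x • e i + y • e j) b
        = (if b = i then x else 0) + (if b = j then y else 0) := by
    intro i j x y b
    simp [he, Pi.single_apply, mul_ite]
  -- fact (1) : Γ a d d = 0 for a ≠ d
  have fact1 : ∀ a d : Fin n, a ≠ d → Γt a d d = 0 := by
    intro a d had
    have hk := key (e d) a d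
    have hsupp : ∀ b : Fin n, b ≠ a → b ≠ d → e d b = 0 := by
      intro b _ hbd; simp [he, Pi.single_apply, hbd]
    rw [pairsum (Γt a) _ a d had hsupp, pairsum (Γt d) _ a d had hsupp] at hk
    simp [he, Pi.single_apply, had, Ne.symm had] at hk
    exact hk
  -- fact (2) : Γ a a d = Γ d d d / 2 for a ≠ d
  have fact2 : ∀ a d : Fin n, a ≠ d → Γt a a d = Γt d d d / 2 := by
    intro a d had
    have key1 := key ((1:ℝ) • e a + (1:ℝ) • e d) a d
    have key2 := key ((1:ℝ) • e a + (-1:ℝ) • e d) a d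
    have hs1 : ∀ b : Fin n, b ≠ a → b ≠ d → ((1:ℝ) • e a + (1:ℝ) • e d) b = 0 := by
      intro b hba hbd; simp [he, Pi.single_apply, hba, hbd]
    have hs2 : ∀ b : Fin n, b ≠ a → b ≠ d → ((1:ℝ) • e a + (-1:ℝ) • e d) b = 0 := by
      intro b hba hbd; simp [he, Pi.single_apply, hba, hbd]
    rw [pairsum (Γt a) _ a d had hs1, pairsum (Γt d) _ a d had hs1] at key1
    rw [pairsum (Γt a) _ a d had hs2, pairsum (Γt d) _ a d had hs2] at key2
    simp [he, Pi.single_apply, had, Ne.symm had] at key1 key2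
    have e1 := fact1 a d had
    have e2 := fact1 d a (Ne.symm had)
    have s1 := hsym a a d
    have s2 := hsym d a d
    nlinarith [key1, key2, e1, e2, s1, s2]
  -- fact (3) : Γ a b c = 0 for pairwise distinct a b c
  have fact3 : ∀ a b c : Fin n, a ≠ b → a ≠ c → b ≠ c → Γt a b c = 0 := by
    intro a b c hab hac hbc
    have hk := key ((1:ℝ) • e b + (1:ℝ) • e c) a b
    have hs : ∀ x : Fin n, x ≠ b → x ≠ c → ((1:ℝ) • e b + (1:ℝ) • e c) x = 0 := by
      intro x hxb hxc; simp [he, Pi.single_apply, hxb, hxc]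
    rw [pairsum (Γt a) _ b c hbc hs, pairsum (Γt b) _ b c hbc hs] at hk
    simp [he, Pi.single_apply, hab, hac, hbc, Ne.symm hbc, Ne.symm hab] at hk
    have e1 := fact1 a b hab
    have e2 := fact1 a c hac
    have s1 := hsym a b c
    nlinarith [hk, e1, e2, s1]
  refine ⟨fun d => Γt d d d / 2, ?_⟩
  intro a b c
  by_cases hab : a = b
  · subst hab
    by_cases hac : a = c
    · subst hac; simp
    · simp [hac, fact2 a c hac]
  · by_cases hac : a = c
    · subst hac
      simp only [if_neg hab, if_pos rfl, zero_add]
      rw [hsym a b a]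
      exact fact2 a b hab
    · by_cases hbc : b = c
      · subst hbc
        simp [hab, hac, fact1 a b hab]
      · simp [hab, hac, fact3 a b c hab hac hbc]
end

section
/- On a pseudo-Riemannian manifold of Lorentz signature (−,+,+,+) in dimension 4, a self-adjoint endomorphism L of the tangent space at a point (self-adjoint with respect to the Lorentzian inner product g) cannot have a complex (non-real) eigenvalue of algebraic multiplicity greater than one, cannot have a Jordan block of size ≥ 2 corresponding to a complex (non-real) eigenvalue, and cannot have a real-eigenvalue Jordan block of size ≥ 4. -/
open Matrix Polynomial ComplexOrder

lemma sa_move {R : Type*} [CommRing R] (g M : Matrix (Fin 4) (Fin 4) R)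
    (h : Mᵀ * g = g * M) (x y : Fin 4 → R) :
    (M *ᵥ x) ⬝ᵥ (g *ᵥ y) = x ⬝ᵥ (g *ᵥ (M *ᵥ y)) := by
  rw [mulVec_mulVec, ← h, ← mulVec_mulVec, dotProduct_mulVec x Mᵀ, vecMul_transpose]

lemma form_symm {R : Type*} [CommRing R] (g : Matrix (Fin 4) (Fin 4) R)
    (hg : g.IsSymm) (x y : Fin 4 → R) : x ⬝ᵥ (g *ᵥ y) = y ⬝ᵥ (g *ᵥ x) := by
  rw [dotProduct_mulVec, ← mulVec_transpose, hg.eq, dotProduct_comm]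

lemma eta_cross (x y : Fin 4 → ℝ)
    (hx : -(x 0 * x 0) + x 1 * x 1 + x 2 * x 2 + x 3 * x 3 = 0)
    (hxy : -(x 0 * y 0) + x 1 * y 1 + x 2 * y 2 + x 3 * y 3 = 0)
    (hy : -(y 0 * y 0) + y 1 * y 1 + y 2 * y 2 + y 3 * y 3 = 0) :
    ∀ i j, x i * y j = x j * y i := by
  have sq0 : ∀ a b c : ℝ, a^2 + b^2 + c^2 = 0 → a = 0 ∧ b = 0 ∧ c = 0 := by
    intro a b c h
    refine ⟨?_, ?_, ?_⟩ <;> nlinarith [sq_nonneg a, sq_nonneg b, sq_nonneg c]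
  have e1 : (x 0 * y 1 - x 1 * y 0)^2 + (x 0 * y 2 - x 2 * y 0)^2 + (x 0 * y 3 - x 3 * y 0)^2 = 0 := by
    linear_combination (x 0 * x 0) * hy + (y 0 * y 0) * hx - 2 * (x 0 * y 0) * hxy
  have e2 : (x 1 * y 2 - x 2 * y 1)^2 + (x 1 * y 3 - x 3 * y 1)^2 + (x 2 * y 3 - x 3 * y 2)^2 = 0 := by
    linear_combination (y 1 * y 1 + y 2 * y 2 + y 3 * y 3) * hx + (x 0 * x 0) * hy
      - (x 0 * y 0 + x 1 * y 1 + x 2 * y 2 + x 3 * y 3) * hxy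
  obtain ⟨f1, f2, f3⟩ := sq0 _ _ _ e1
  obtain ⟨g1, g2, g3⟩ := sq0 _ _ _ e2
  have h01 : x 0 * y 1 = x 1 * y 0 := by linarith
  have h02 : x 0 * y 2 = x 2 * y 0 := by linarith
  have h03 : x 0 * y 3 = x 3 * y 0 := by linarith
  have h12 : x 1 * y 2 = x 2 * y 1 := by linarith
  have h13 : x 1 * y 3 = x 3 * y 1 := by linarith
  have h23 : x 2 * y 3 = x 3 * y 2 := by linarith
  intro i j
  fin_cases i <;> fin_cases j <;>
    first
    | rfl
    | exact h01
    | exact h01.symm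
    | exact h02
    | exact h02.symm
    | exact h03
    | exact h03.symm
    | exact h12
    | exact h12.symm
    | exact h13
    | exact h13.symm
    | exact h23
    | exact h23.symm

lemma congr_form (g P : Matrix (Fin 4) (Fin 4) ℝ) (x y : Fin 4 → ℝ) :
    (P *ᵥ x) ⬝ᵥ (g *ᵥ (P *ᵥ y)) = x ⬝ᵥ ((Pᵀ * g * P) *ᵥ y) := by
  calc (P *ᵥ x) ⬝ᵥ (g *ᵥ (P *ᵥ y)) = x ᵥ* Pᵀ ⬝ᵥ ((g * P) *ᵥ y) := by
        rw [mulVec_mulVec, ← vecMul_transpose]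
    _ = x ⬝ᵥ (Pᵀ *ᵥ ((g * P) *ᵥ y)) := (dotProduct_mulVec _ _ _).symm
    _ = x ⬝ᵥ ((Pᵀ * g * P) *ᵥ y) := by rw [mulVec_mulVec, Matrix.mul_assoc]

lemma eta_expand (x y : Fin 4 → ℝ) :
    x ⬝ᵥ ((Matrix.diagonal ![-1, 1, 1, 1]) *ᵥ y)
      = -(x 0 * y 0) + x 1 * y 1 + x 2 * y 2 + x 3 * y 3 := by
  simp [dotProduct, mulVec_diagonal, Fin.sum_univ_four]

lemma isotropic_dep (g : Matrix (Fin 4) (Fin 4) ℝ)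
    (hsig : ∃ P : Matrix (Fin 4) (Fin 4) ℝ, IsUnit P ∧
      P.transpose * g * P = Matrix.diagonal ![-1, 1, 1, 1])
    (a b : Fin 4 → ℝ)
    (haa : a ⬝ᵥ (g *ᵥ a) = 0) (hab : a ⬝ᵥ (g *ᵥ b) = 0) (hbb : b ⬝ᵥ (g *ᵥ b) = 0) :
    ∃ c d : ℝ, ¬(c = 0 ∧ d = 0) ∧ c • a + d • b = 0 := by
  obtain ⟨P, hP, hPg⟩ := hsig
  obtain ⟨u, rfl⟩ := hP
  set P : Matrix (Fin 4) (Fin 4) ℝ := (u : Matrix (Fin 4) (Fin 4) ℝ)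
  have hPQ : P * (↑u⁻¹ : Matrix (Fin 4) (Fin 4) ℝ) = 1 := u.mul_inv
  set x : Fin 4 → ℝ := (↑u⁻¹ : Matrix (Fin 4) (Fin 4) ℝ) *ᵥ a with hxdef
  set y : Fin 4 → ℝ := (↑u⁻¹ : Matrix (Fin 4) (Fin 4) ℝ) *ᵥ b with hydef
  have hPx : P *ᵥ x = a := by rw [hxdef, mulVec_mulVec, hPQ, one_mulVec]
  have hPy : P *ᵥ y = b := by rw [hydef, mulVec_mulVec, hPQ, one_mulVec]
  have hx : -(x 0 * x 0) + x 1 * x 1 + x 2 * x 2 + x 3 * x 3 = 0 := by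
    rw [← eta_expand, ← hPg, ← congr_form, hPx, haa]
  have hxy : -(x 0 * y 0) + x 1 * y 1 + x 2 * y 2 + x 3 * y 3 = 0 := by
    rw [← eta_expand, ← hPg, ← congr_form, hPx, hPy, hab]
  have hy : -(y 0 * y 0) + y 1 * y 1 + y 2 * y 2 + y 3 * y 3 = 0 := by
    rw [← eta_expand, ← hPg, ← congr_form, hPy, hbb]
  have cross := eta_cross x y hx hxy hy
  by_cases hx0 : x = 0
  · refine ⟨1, 0, by simp, ?_⟩
    have : a = 0 := by rw [← hPx, hx0, mulVec_zero]
    simp [this]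
  · obtain ⟨k, hk'⟩ := Function.ne_iff.mp hx0
    have hk : x k ≠ 0 := by simpa using hk'
    refine ⟨y k, -(x k), fun h => hk (neg_eq_zero.mp h.2), ?_⟩
    have hz : (y k) • x + (-(x k)) • y = 0 := by
      funext i
      have := cross i k
      simp only [Pi.add_apply, Pi.smul_apply, smul_eq_mul, Pi.zero_apply]
      nlinarith [cross i k]
    calc (y k) • a + (-(x k)) • b = P *ᵥ ((y k) • x + (-(x k)) • y) := by
          rw [mulVec_add, mulVec_smul, mulVec_smul, hPx, hPy]
      _ = 0 := by rw [hz, mulVec_zero]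

lemma mulVec_ofReal (M : Matrix (Fin 4) (Fin 4) ℝ) (v : Fin 4 → ℝ) :
    (M.map (algebraMap ℝ ℂ)) *ᵥ (fun i => (v i : ℂ)) = fun i => ((M *ᵥ v) i : ℂ) := by
  funext i
  simp [mulVec, dotProduct, Matrix.map_apply]

lemma form_ofReal (g : Matrix (Fin 4) (Fin 4) ℝ) (u v : Fin 4 → ℝ) :
    (fun i => (u i : ℂ)) ⬝ᵥ ((g.map (algebraMap ℝ ℂ)) *ᵥ (fun i => (v i : ℂ)))
      = ((u ⬝ᵥ (g *ᵥ v) : ℝ) : ℂ) := by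
  rw [mulVec_ofReal]
  simp [dotProduct]

lemma real_eigvec_contra (L : Matrix (Fin 4) (Fin 4) ℝ) (μ : ℂ) (hμ : μ.im ≠ 0)
    (u : Fin 4 → ℝ) (hu : u ≠ 0)
    (h : (L.map (algebraMap ℝ ℂ)) *ᵥ (fun i => (u i : ℂ)) = μ • (fun i => (u i : ℂ))) :
    False := by
  obtain ⟨k, hk'⟩ := Function.ne_iff.mp hu
  have hk : u k ≠ 0 := by simpa using hk'
  have h2 := congrFun h k
  rw [mulVec_ofReal] at h2
  have him := congrArg Complex.im h2
  simp [Complex.mul_im] at him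
  rcases him with h | h
  · exact hμ h
  · exact hk h


lemma isotropic_eigvec_contra (g L : Matrix (Fin 4) (Fin 4) ℝ)
    (hgsym : g.IsSymm)
    (hsig : ∃ P : Matrix (Fin 4) (Fin 4) ℝ, IsUnit P ∧
      P.transpose * g * P = Matrix.diagonal ![-1, 1, 1, 1])
    (hselfadj : L.transpose * g = g * L)
    (μ : ℂ) (hμ : μ.im ≠ 0) (w : Fin 4 → ℂ) (hw : w ≠ 0)
    (heig : (L.map (algebraMap ℝ ℂ)) *ᵥ w = μ • w)
    (hww : w ⬝ᵥ ((g.map (algebraMap ℝ ℂ)) *ᵥ w) = 0) : False := by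
  set A := L.map (algebraMap ℝ ℂ) with hA
  set G := g.map (algebraMap ℝ ℂ) with hG
  have hsaC : Aᵀ * G = G * A := by
    rw [hA, hG, ← Matrix.transpose_map, ← _root_.Matrix.map_mul, ← _root_.Matrix.map_mul,
      hselfadj]
  set wb : Fin 4 → ℂ := fun i => (starRingEnd ℂ) (w i) with hwb
  have hAreal : ∀ i j, (starRingEnd ℂ) (A i j) = A i j := by
    intro i j; simp [hA, Matrix.map_apply, Complex.conj_ofReal]
  have hAwb : A *ᵥ wb = (starRingEnd ℂ μ) • wb := by
    funext i
    have h2 := congrArg (starRingEnd ℂ) (congrFun heig i)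
    simp only [mulVec, dotProduct, map_sum, _root_.map_mul, Pi.smul_apply, smul_eq_mul,
      hwb] at h2 ⊢
    simp only [hAreal] at h2
    exact h2
  have hmove := sa_move G A hsaC w wb
  rw [heig, hAwb, smul_dotProduct, mulVec_smul, dotProduct_smul] at hmove
  have hsub : μ ≠ (starRingEnd ℂ) μ := fun h => hμ (Complex.conj_eq_iff_im.mp h.symm)
  have hwwb : w ⬝ᵥ (G *ᵥ wb) = 0 := by
    by_contra hne
    exact hsub (mul_right_cancel₀ hne (by simpa [smul_eq_mul] using hmove))
  set a : Fin 4 → ℝ := fun i => (w i).re with ha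
  set b : Fin 4 → ℝ := fun i => (w i).im with hb
  set ca : Fin 4 → ℂ := fun i => ((a i : ℝ) : ℂ) with hca
  set cb : Fin 4 → ℂ := fun i => ((b i : ℝ) : ℂ) with hcb
  have hwa : w = ca + Complex.I • cb := by
    funext i
    simp only [Pi.add_apply, Pi.smul_apply, smul_eq_mul, hca, hcb, ha, hb]
    rw [mul_comm, Complex.re_add_im]
  have hwba : wb = ca - Complex.I • cb := by
    funext i
    simp only [hwb, Pi.sub_apply, Pi.smul_apply, smul_eq_mul, hca, hcb, ha, hb]
    apply Complex.ext <;> simp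
  set Baa := a ⬝ᵥ (g *ᵥ a) with hBaa
  set Bab := a ⬝ᵥ (g *ᵥ b) with hBab
  set Bba := b ⬝ᵥ (g *ᵥ a) with hBba
  set Bbb := b ⬝ᵥ (g *ᵥ b) with hBbb
  have expand1 : w ⬝ᵥ (G *ᵥ w) = ((Baa : ℂ) - Bbb) + ((Bab : ℂ) + Bba) * Complex.I := by
    conv_lhs => rw [hwa]
    simp only [mulVec_add, mulVec_smul, dotProduct_add, add_dotProduct, dotProduct_smul,
      smul_dotProduct, smul_eq_mul]
    rw [hG, hca, hcb]
    rw [form_ofReal, form_ofReal, form_ofReal, form_ofReal]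
    rw [← hBaa, ← hBab, ← hBba, ← hBbb]
    linear_combination (Bbb : ℂ) * Complex.I_sq
  have expand2 : w ⬝ᵥ (G *ᵥ wb) = ((Baa : ℂ) + Bbb) + ((Bba : ℂ) - Bab) * Complex.I := by
    conv_lhs => rw [hwa, hwba]
    simp only [mulVec_add, mulVec_sub, mulVec_smul, dotProduct_add, dotProduct_sub,
      add_dotProduct, sub_dotProduct, dotProduct_smul, smul_dotProduct, smul_eq_mul]
    rw [hG, hca, hcb]
    rw [form_ofReal, form_ofReal, form_ofReal, form_ofReal]
    rw [← hBaa, ← hBab, ← hBba, ← hBbb]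
    linear_combination (-(Bbb : ℂ)) * Complex.I_sq
  rw [expand1] at hww
  rw [expand2] at hwwb
  have hre1 := congrArg Complex.re hww
  have him1 := congrArg Complex.im hww
  have hre2 := congrArg Complex.re hwwb
  simp at hre1 him1 hre2
  have hsymm : Bab = Bba := form_symm g hgsym a b
  have haa0 : Baa = 0 := by linarith
  have hab0 : Bab = 0 := by linarith
  have hbb0 : Bbb = 0 := by linarith
  obtain ⟨c, d, hcd, hdep⟩ := isotropic_dep g hsig a b haa0 hab0 hbb0
  -- from dependence, produce a real eigenvector
  by_cases hd : d = 0
  · have hc : c ≠ 0 := fun h => hcd ⟨h, hd⟩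
    have ha0 : a = 0 := by
      have : c • a = 0 := by simpa [hd] using hdep
      rcases smul_eq_zero.mp this with h | h
      · exact absurd h hc
      · exact h
    have hca0 : ca = 0 := by funext i; simp [hca, congrFun ha0 i]
    have hcb0 : w = Complex.I • cb := by rw [hwa, hca0, zero_add]
    have hb0 : b ≠ 0 := by
      intro h
      apply hw
      have : cb = 0 := by funext i; simp [hcb, congrFun h i]
      rw [hcb0, this, smul_zero]
    have heig2 : A *ᵥ cb = μ • cb := by
      have h3 : Complex.I • (A *ᵥ cb) = Complex.I • (μ • cb) := by
        rw [← mulVec_smul, ← hcb0, heig, hcb0, smul_comm]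
      exact smul_right_injective _ Complex.I_ne_zero h3
    exact real_eigvec_contra L μ hμ b hb0 (by rw [← hA, ← hcb]; exact heig2)
  · set t : ℝ := -(c / d) with ht
    have hb2 : b = t • a := by
      funext i
      have := congrFun hdep i
      simp only [Pi.add_apply, Pi.smul_apply, smul_eq_mul, Pi.zero_apply] at this ⊢
      field_simp [ht]
      rw [ht]; field_simp; linarith [this]
    set s : ℂ := 1 + (t : ℂ) * Complex.I with hs
    have hs0 : s ≠ 0 := by
      intro h
      have := congrArg Complex.re h
      simp [hs] at this
    have hws : w = s • ca := by
      rw [hwa]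
      funext i
      simp only [Pi.add_apply, Pi.smul_apply, smul_eq_mul, hca, hcb, hb2, hs]
      push_cast
      ring
    have ha0 : a ≠ 0 := by
      intro h
      apply hw
      have : ca = 0 := by funext i; simp [hca, congrFun h i]
      rw [hws, this, smul_zero]
    have heig2 : A *ᵥ ca = μ • ca := by
      have h3 : s • (A *ᵥ ca) = s • (μ • ca) := by
        rw [← mulVec_smul, ← hws, heig, hws, smul_comm]
      exact smul_right_injective _ hs0 h3
    exact real_eigvec_contra L μ hμ a ha0 (by rw [← hA, ← hca]; exact heig2)

lemma part2 (g L : Matrix (Fin 4) (Fin 4) ℝ)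
    (hgsym : g.IsSymm)
    (hsig : ∃ P : Matrix (Fin 4) (Fin 4) ℝ, IsUnit P ∧
      P.transpose * g * P = Matrix.diagonal ![-1, 1, 1, 1])
    (hselfadj : L.transpose * g = g * L)
    (μ : ℂ) (hμ : μ.im ≠ 0) (v : Fin 4 → ℂ)
    (h2 : ((L.map (algebraMap ℝ ℂ) - μ • (1 : Matrix (Fin 4) (Fin 4) ℂ)) ^ 2) *ᵥ v = 0) :
    (L.map (algebraMap ℝ ℂ) - μ • (1 : Matrix (Fin 4) (Fin 4) ℂ)) *ᵥ v = 0 := by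
  set A := L.map (algebraMap ℝ ℂ) with hA
  set G := g.map (algebraMap ℝ ℂ) with hG
  set M := A - μ • (1 : Matrix (Fin 4) (Fin 4) ℂ) with hM
  have hsaC : Aᵀ * G = G * A := by
    rw [hA, hG, ← Matrix.transpose_map, ← _root_.Matrix.map_mul, ← _root_.Matrix.map_mul,
      hselfadj]
  have hsaM : Mᵀ * G = G * M := by
    rw [hM, transpose_sub, transpose_smul, transpose_one, sub_mul, mul_sub, hsaC,
      smul_mul_assoc, mul_smul_comm, one_mul, mul_one]
  by_contra hne
  set w := M *ᵥ v with hw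
  have hMM : M *ᵥ w = 0 := by
    rw [hw, mulVec_mulVec, ← sq]
    exact h2
  have heig : A *ᵥ w = μ • w := by
    have h3 : (A - μ • (1 : Matrix (Fin 4) (Fin 4) ℂ)) *ᵥ w = 0 := hMM
    rw [sub_mulVec, smul_mulVec, one_mulVec, sub_eq_zero] at h3
    exact h3
  have hww : w ⬝ᵥ (G *ᵥ w) = 0 := by
    have h4 := sa_move G M hsaM v w
    rw [hw] at h4 ⊢
    rw [h4, hMM, mulVec_zero, dotProduct_zero]
  exact isotropic_eigvec_contra g L hgsym hsig hselfadj μ hμ w hne heig hww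

lemma part3 (g L : Matrix (Fin 4) (Fin 4) ℝ)
    (hgsym : g.IsSymm)
    (hsig : ∃ P : Matrix (Fin 4) (Fin 4) ℝ, IsUnit P ∧
      P.transpose * g * P = Matrix.diagonal ![-1, 1, 1, 1])
    (hselfadj : L.transpose * g = g * L)
    (lam : ℝ) (v : Fin 4 → ℝ)
    (h4 : ((L - lam • (1 : Matrix (Fin 4) (Fin 4) ℝ)) ^ 4) *ᵥ v = 0) :
    ((L - lam • (1 : Matrix (Fin 4) (Fin 4) ℝ)) ^ 3) *ᵥ v = 0 := by
  set N := L - lam • (1 : Matrix (Fin 4) (Fin 4) ℝ) with hN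
  have hsaN : Nᵀ * g = g * N := by
    rw [hN, transpose_sub, transpose_smul, transpose_one, sub_mul, mul_sub, hselfadj,
      smul_mul_assoc, mul_smul_comm, one_mul, mul_one]
  have s1 := sa_move g N hsaN
  set v1 := N *ᵥ v with hv1
  set v2 := N *ᵥ v1 with hv2
  set v3 := N *ᵥ v2 with hv3
  rw [pow_succ, ← mulVec_mulVec, pow_succ, ← mulVec_mulVec, pow_succ, ← mulVec_mulVec,
    pow_one] at h4
  rw [pow_succ, ← mulVec_mulVec, pow_succ, ← mulVec_mulVec, pow_one]
  have e4 : N *ᵥ v3 = 0 := h4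
  show N *ᵥ v2 = 0
  by_contra h3
  have h3' : v3 ≠ 0 := h3
  have haa : v2 ⬝ᵥ (g *ᵥ v2) = 0 := by
    have t1 : v2 ⬝ᵥ (g *ᵥ v2) = v1 ⬝ᵥ (g *ᵥ v3) := s1 v1 v2
    have t2 : v1 ⬝ᵥ (g *ᵥ v3) = v ⬝ᵥ (g *ᵥ (N *ᵥ v3)) := s1 v v3
    rw [t1, t2, e4, mulVec_zero, dotProduct_zero]
  have hab : v2 ⬝ᵥ (g *ᵥ v3) = 0 := by
    have t1 : v2 ⬝ᵥ (g *ᵥ v3) = v1 ⬝ᵥ (g *ᵥ (N *ᵥ v3)) := s1 v1 v3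
    rw [t1, e4, mulVec_zero, dotProduct_zero]
  have hbb : v3 ⬝ᵥ (g *ᵥ v3) = 0 := by
    have t1 : v3 ⬝ᵥ (g *ᵥ v3) = v2 ⬝ᵥ (g *ᵥ (N *ᵥ v3)) := s1 v2 v3
    rw [t1, e4, mulVec_zero, dotProduct_zero]
  obtain ⟨c, d, hcd, hdep⟩ := isotropic_dep g hsig v2 v3 haa hab hbb
  have h5 := congrArg (fun x => N *ᵥ x) hdep
  simp only [mulVec_add, mulVec_smul, mulVec_zero] at h5
  rw [e4, smul_zero, add_zero] at h5
  have happ : c • v3 = 0 := h5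
  have hc : c = 0 := by
    rcases smul_eq_zero.mp happ with h | h
    · exact h
    · exact absurd h h3'
  have hd : d = 0 := by
    have h6 : d • v3 = 0 := by
      have h7 := hdep
      rw [hc, zero_smul, zero_add] at h7
      exact h7
    rcases smul_eq_zero.mp h6 with h | h
    · exact h
    · exact absurd h h3'
  exact hcd ⟨hc, hd⟩

lemma exists_indep_pair (K : Submodule ℂ (Fin 4 → ℂ)) (h2 : 2 ≤ Module.finrank ℂ K) :
    ∃ w1 w2 : Fin 4 → ℂ, w1 ∈ K ∧ w2 ∈ K ∧ w2 ≠ 0 ∧ ∀ z : ℂ, w1 + z • w2 ≠ 0 := by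
  set b := Module.finBasis ℂ K with hb
  set i0 : Fin (Module.finrank ℂ K) := ⟨0, by omega⟩ with hi0
  set i1 : Fin (Module.finrank ℂ K) := ⟨1, by omega⟩ with hi1
  have hne01 : i1 ≠ i0 := by
    intro h
    have := congrArg Fin.val h
    simp [hi0, hi1] at this
  refine ⟨↑(b i0), ↑(b i1), (b i0).2, (b i1).2,
    fun h => b.ne_zero i1 (ZeroMemClass.coe_eq_zero.mp h), ?_⟩
  intro z h
  have hKz : (b i0 + z • b i1 : K) = 0 := by
    apply ZeroMemClass.coe_eq_zero.mp
    push_cast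
    exact h
  have h10 : ((b.repr (b i0 + z • b i1)) i0 : ℂ) = 0 := by rw [hKz, LinearEquiv.map_zero]; rfl
  rw [LinearEquiv.map_add, LinearEquiv.map_smul, Module.Basis.repr_self, Module.Basis.repr_self,
    Finsupp.add_apply, Finsupp.smul_apply, Finsupp.single_eq_same,
    Finsupp.single_eq_of_ne' hne01] at h10
  simp at h10

set_option maxHeartbeats 4000000 in
lemma part1 (g L : Matrix (Fin 4) (Fin 4) ℝ)
    (hgsym : g.IsSymm)
    (hsig : ∃ P : Matrix (Fin 4) (Fin 4) ℝ, IsUnit P ∧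
      P.transpose * g * P = Matrix.diagonal ![-1, 1, 1, 1])
    (hselfadj : L.transpose * g = g * L)
    (μ : ℂ) (hμ : μ.im ≠ 0) :
    ((L.map (algebraMap ℝ ℂ)).charpoly).rootMultiplicity μ ≤ 1 := by
  by_contra hmult
  push_neg at hmult
  set A := L.map (algebraMap ℝ ℂ) with hA
  set G := g.map (algebraMap ℝ ℂ) with hG
  set p := A.charpoly with hp
  set ν := (starRingEnd ℂ) μ with hν
  have hνim : ν.im ≠ 0 := by
    rw [hν]
    simpa using neg_ne_zero.mpr hμ
  have hne : μ ≠ ν := fun h => hμ (Complex.conj_eq_iff_im.mp h.symm)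
  have dvd1 : (X - C μ) ^ 2 ∣ p :=
    dvd_trans (pow_dvd_pow _ hmult) (p.pow_rootMultiplicity_dvd μ)
  have hpmap : p.map (starRingEnd ℂ) = p := by
    rw [hp, ← Matrix.charpoly_map]
    congr 1
    ext i j
    simp [hA, Matrix.map_apply, Complex.conj_ofReal]
  have dvd2 : (X - C ν) ^ 2 ∣ p := by
    have h1 := Polynomial.map_dvd (starRingEnd ℂ) dvd1
    rw [hpmap] at h1
    simpa [Polynomial.map_pow, Polynomial.map_sub, Polynomial.map_X, Polynomial.map_C,
      hν] using h1
  have hcop : IsCoprime ((X - C μ) ^ 2) ((X - C ν) ^ 2) :=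
    (Polynomial.isCoprime_X_sub_C_of_isUnit_sub ((sub_ne_zero.mpr hne).isUnit)).pow
  have hdvd : (X - C μ) ^ 2 * (X - C ν) ^ 2 ∣ p := hcop.mul_dvd dvd1 dvd2
  have hpdeg : p.natDegree = 4 := by
    rw [hp, Matrix.charpoly_natDegree_eq_dim]
    simp
  have hqmonic : ((X - C μ) ^ 2 * (X - C ν) ^ 2).Monic :=
    ((monic_X_sub_C μ).pow 2).mul ((monic_X_sub_C ν).pow 2)
  have hqdeg : ((X - C μ) ^ 2 * (X - C ν) ^ 2).natDegree = 4 := by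
    rw [Polynomial.natDegree_mul (((monic_X_sub_C μ).pow 2).ne_zero)
      (((monic_X_sub_C ν).pow 2).ne_zero), Polynomial.natDegree_pow,
      Polynomial.natDegree_pow, Polynomial.natDegree_X_sub_C, Polynomial.natDegree_X_sub_C]
  have hpq : p = (X - C μ) ^ 2 * (X - C ν) ^ 2 := by
    obtain ⟨r, hr⟩ := hdvd
    have hr0 : r ≠ 0 := by
      rintro rfl
      rw [mul_zero] at hr
      exact (Matrix.charpoly_monic A).ne_zero hr
    have hdegr : r.natDegree = 0 := by
      have h2 : p.natDegree = ((X - C μ) ^ 2 * (X - C ν) ^ 2).natDegree + r.natDegree := by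
        rw [hr, Polynomial.natDegree_mul hqmonic.ne_zero hr0]
      omega
    have hrC : r = C (r.coeff 0) := Polynomial.eq_C_of_natDegree_eq_zero hdegr
    have hlc : r.coeff 0 = 1 := by
      have h2 := congrArg Polynomial.leadingCoeff hr
      rw [(Matrix.charpoly_monic A).leadingCoeff, Polynomial.leadingCoeff_mul,
        hqmonic.leadingCoeff, one_mul, Polynomial.leadingCoeff, hdegr] at h2
      exact h2.symm
    rw [hr, hrC, hlc, Polynomial.C_1, mul_one]
  have hCH : (A - μ • (1 : Matrix (Fin 4) (Fin 4) ℂ)) ^ 2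
      * (A - ν • (1 : Matrix (Fin 4) (Fin 4) ℂ)) ^ 2 = 0 := by
    have h3 := Matrix.aeval_self_charpoly A
    rw [← hp, hpq] at h3
    simpa [_root_.map_mul, map_pow, map_sub, Polynomial.aeval_X, Polynomial.aeval_C,
      Algebra.algebraMap_eq_smul_one] using h3
  have hCH' : (A - ν • (1 : Matrix (Fin 4) (Fin 4) ℂ)) ^ 2
      * (A - μ • (1 : Matrix (Fin 4) (Fin 4) ℂ)) ^ 2 = 0 := by
    have h3 := Matrix.aeval_self_charpoly A
    rw [← hp, hpq, mul_comm ((X - C μ) ^ 2) ((X - C ν) ^ 2)] at h3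
    simpa [_root_.map_mul, map_pow, map_sub, Polynomial.aeval_X, Polynomial.aeval_C,
      Algebra.algebraMap_eq_smul_one] using h3
  set M := A - μ • (1 : Matrix (Fin 4) (Fin 4) ℂ) with hM
  set M' := A - ν • (1 : Matrix (Fin 4) (Fin 4) ℂ) with hM'
  have hdiffv : ∀ x : Fin 4 → ℂ, M' *ᵥ x = M *ᵥ x + (μ - ν) • x := by
    intro x
    rw [hM, hM', sub_mulVec, sub_mulVec, smul_mulVec, smul_mulVec, one_mulVec,
      sub_smul]
    abel
  have hcommv : ∀ x, M' *ᵥ (M *ᵥ x) = M *ᵥ (M' *ᵥ x) := by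
    intro x
    rw [hdiffv (M *ᵥ x), hdiffv x, mulVec_add, mulVec_smul]
  have hMM'sq : ∀ u, M *ᵥ (M' *ᵥ (M' *ᵥ u)) = 0 := by
    intro u
    have h5 : (M ^ 2) *ᵥ (M' *ᵥ (M' *ᵥ u)) = 0 := by
      rw [mulVec_mulVec u M' M', ← pow_two, mulVec_mulVec, hCH, zero_mulVec]
    exact part2 g L hgsym hsig hselfadj μ hμ _ h5
  have hM'Msq : ∀ u, M' *ᵥ (M *ᵥ (M *ᵥ u)) = 0 := by
    intro u
    have h5 : (M' ^ 2) *ᵥ (M *ᵥ (M *ᵥ u)) = 0 := by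
      rw [mulVec_mulVec u M M, ← pow_two, mulVec_mulVec, hCH', zero_mulVec]
    exact part2 g L hgsym hsig hselfadj ν hνim _ h5
  have hMM' : ∀ u, M *ᵥ (M' *ᵥ u) = 0 := by
    intro u
    have h6 : M' *ᵥ (M' *ᵥ u) = M' *ᵥ (M *ᵥ u) + (μ - ν) • (M' *ᵥ u) := by
      conv_lhs => rw [hdiffv u]
      rw [mulVec_add, mulVec_smul]
    have h7 := hMM'sq u
    rw [h6, mulVec_add, mulVec_smul, ← hcommv (M *ᵥ u)] at h7
    rw [hM'Msq u, zero_add] at h7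
    rcases smul_eq_zero.mp h7 with h | h
    · exact absurd (sub_eq_zero.mp h) hne
    · exact h
  -- rank argument: ker M has dimension ≥ 2
  set f := M.mulVecLin with hf
  set f' := M'.mulVecLin with hf'
  have hrange : LinearMap.range f' ≤ LinearMap.ker f := by
    rintro x ⟨u, rfl⟩
    rw [LinearMap.mem_ker, hf, hf', Matrix.mulVecLin_apply, Matrix.mulVecLin_apply]
    exact hMM' u
  have hconj : M' = Mᴴᵀ := by
    ext i j
    rw [hM, hM']
    simp only [Matrix.transpose_apply, Matrix.conjTranspose_apply, Matrix.sub_apply,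
      Matrix.smul_apply, Matrix.one_apply, smul_eq_mul, star_sub, star_mul', hA,
      Matrix.map_apply, hν]
    by_cases hij : i = j <;>
      simp [hij, Complex.conj_ofReal]
  have hrank : M'.rank = M.rank := by rw [hconj, Matrix.rank_transpose, Matrix.rank_conjTranspose]
  have hrn := LinearMap.finrank_range_add_finrank_ker f
  rw [Module.finrank_pi] at hrn
  simp only [Fintype.card_fin] at hrn
  have h8 : Module.finrank ℂ (LinearMap.range f') ≤ Module.finrank ℂ (LinearMap.ker f) :=
    Submodule.finrank_mono hrange
  have h9 : Module.finrank ℂ (LinearMap.range f') = Module.finrank ℂ (LinearMap.range f) :=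
    hrank
  have hker2 : 2 ≤ Module.finrank ℂ (LinearMap.ker f) := by omega
  -- two independent eigenvectors
  obtain ⟨w1, w2, hw1K, hw2K, hw2ne, hind⟩ := exists_indep_pair (LinearMap.ker f) hker2
  have heig : ∀ u : Fin 4 → ℂ, u ∈ LinearMap.ker f → A *ᵥ u = μ • u := by
    intro u hu
    have h11 : M *ᵥ u = 0 := LinearMap.mem_ker.mp hu
    rw [hM, sub_mulVec, smul_mulVec, one_mulVec, sub_eq_zero] at h11
    exact h11
  have hGsymC : G.IsSymm := by
    show Gᵀ = G
    rw [hG, ← Matrix.transpose_map, hgsym.eq]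
  have hG21 : w2 ⬝ᵥ (G *ᵥ w1) = w1 ⬝ᵥ (G *ᵥ w2) := form_symm G hGsymC w2 w1
  by_cases h22 : w2 ⬝ᵥ (G *ᵥ w2) = 0
  · exact isotropic_eigvec_contra g L hgsym hsig hselfadj μ hμ w2 hw2ne (heig w2 hw2K) h22
  · obtain ⟨z, hz⟩ := Complex.exists_root
      (f := C (w2 ⬝ᵥ (G *ᵥ w2)) * X ^ 2 + C (2 * (w1 ⬝ᵥ (G *ᵥ w2))) * X + C (w1 ⬝ᵥ (G *ᵥ w1)))
      (by rw [Polynomial.degree_quadratic h22]; norm_num)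
    have hzeq : (w2 ⬝ᵥ (G *ᵥ w2)) * z ^ 2 + 2 * (w1 ⬝ᵥ (G *ᵥ w2)) * z
        + (w1 ⬝ᵥ (G *ᵥ w1)) = 0 := by
      simpa [Polynomial.IsRoot] using hz
    have hwne : w1 + z • w2 ≠ 0 := hind z
    have heigw : A *ᵥ (w1 + z • w2) = μ • (w1 + z • w2) := by
      rw [mulVec_add, mulVec_smul, heig w1 hw1K, heig w2 hw2K, smul_add, smul_comm]
    have hww : (w1 + z • w2) ⬝ᵥ (G *ᵥ (w1 + z • w2)) = 0 := by
      simp only [mulVec_add, mulVec_smul, dotProduct_add, add_dotProduct, dotProduct_smul,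
        smul_dotProduct, smul_eq_mul]
      rw [hG21]
      linear_combination hzeq
    exact isotropic_eigvec_contra g L hgsym hsig hselfadj μ hμ _ hwne heigw hww

/-- a self-adjoint endomorphism of a 4-dimensional Lorentzian inner
product space has no non-real eigenvalue of algebraic multiplicity `≥ 2`, no Jordan
block of size `≥ 2` for a non-real eigenvalue, and no Jordan block of size `≥ 4`
for a real eigenvalue. -/
theorem lorentz_selfadjoint_jordan_restrictions
    (g L : Matrix (Fin 4) (Fin 4) ℝ)
    (hgsym : g.IsSymm)
    (hsig : ∃ P : Matrix (Fin 4) (Fin 4) ℝ, IsUnit P ∧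
      P.transpose * g * P = Matrix.diagonal ![-1, 1, 1, 1])
    (hselfadj : L.transpose * g = g * L) :
    (∀ μ : ℂ, μ.im ≠ 0 →
      ((L.map (algebraMap ℝ ℂ)).charpoly).rootMultiplicity μ ≤ 1) ∧
    (∀ μ : ℂ, μ.im ≠ 0 → ∀ v : Fin 4 → ℂ,
      ((L.map (algebraMap ℝ ℂ) - μ • (1 : Matrix (Fin 4) (Fin 4) ℂ)) ^ 2).mulVec v = 0 →
      (L.map (algebraMap ℝ ℂ) - μ • (1 : Matrix (Fin 4) (Fin 4) ℂ)).mulVec v = 0) ∧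
    (∀ lam : ℝ, ∀ v : Fin 4 → ℝ,
      ((L - lam • (1 : Matrix (Fin 4) (Fin 4) ℝ)) ^ 4).mulVec v = 0 →
      ((L - lam • (1 : Matrix (Fin 4) (Fin 4) ℝ)) ^ 3).mulVec v = 0) := by
  exact ⟨fun μ hμ => part1 g L hgsym hsig hselfadj μ hμ,
    fun μ hμ v h => part2 g L hgsym hsig hselfadj μ hμ v h,
    fun lam v h => part3 g L hgsym hsig hselfadj lam v h⟩
end

section
/- Let g₁, g₂ be nondegenerate symmetric bilinear forms on vector spaces V₁, V₂, and let Lᵢ be gᵢ-self-adjoint endomorphisms of Vᵢ with disjoint real spectra and all eigenvalues real. Define on V = V₁ ⊕ V₂ the bilinear form g(u,v) = g₁(χ₂(L₁)u₁, v₁) + g₂(χ₁(L₂)u₂, v₂), where χᵢ is the characteristic polynomial of Lᵢ. Then g is symmetric and nondegenerate, and the block-diagonal endomorphism L = L₁ ⊕ L₂ is g-self-adjoint. -/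
open Polynomial

section Aux

variable {V : Type*} [AddCommGroup V] [Module ℝ V]

/-- powers of a self-adjoint operator are self-adjoint -/
private lemma pow_selfadj (g : V →ₗ[ℝ] V →ₗ[ℝ] ℝ) (L : Module.End ℝ V)
    (hsa : ∀ u v, g (L u) v = g u (L v)) (n : ℕ) :
    ∀ u v, g ((L ^ n) u) v = g u ((L ^ n) v) := by
  induction n with
  | zero => intro u v; simp
  | succ n ih =>
    intro u v
    have h1 : (L ^ (n + 1)) u = (L ^ n) (L u) := by
      rw [pow_succ]; rfl
    have h2 : (L ^ (n + 1)) v = L ((L ^ n) v) := by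
      rw [pow_succ']; rfl
    rw [h1, h2, ih (L u) v, hsa]

/-- polynomials of a self-adjoint operator are self-adjoint -/
private lemma aeval_selfadj (g : V →ₗ[ℝ] V →ₗ[ℝ] ℝ) (L : Module.End ℝ V)
    (hsa : ∀ u v, g (L u) v = g u (L v)) (p : ℝ[X]) :
    ∀ u v, g ((aeval L p) u) v = g u ((aeval L p) v) := by
  induction p using Polynomial.induction_on' with
  | add p q hp hq =>
    intro u v
    simp only [map_add, LinearMap.add_apply, LinearMap.map_add]
    rw [hp, hq]
  | monomial n a =>
    intro u v
    have h : (aeval L (monomial n a)) = a • (L ^ n) := by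
      rw [aeval_monomial, Algebra.algebraMap_eq_smul_one]
      ext w
      simp [Module.End.mul_apply]
    rw [h]
    simp only [LinearMap.smul_apply, map_smul, LinearMap.smul_apply]
    rw [pow_selfadj g L hsa n u v]

variable [FiniteDimensional ℝ V]

/-- a root of the characteristic polynomial lies in the spectrum -/
private lemma mem_spectrum_of_isRoot_charpoly (L : Module.End ℝ V) {μ : ℝ}
    (h : (LinearMap.charpoly L).IsRoot μ) : μ ∈ spectrum ℝ L := by
  classical
  let b := Module.finBasis ℝ V
  let M := LinearMap.toMatrix b b L
  have hcp : M.charpoly = LinearMap.charpoly L := LinearMap.charpoly_toMatrix L b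
  have heval : (M.charpoly).eval μ = 0 := by rw [hcp]; exact h
  -- eval μ charpoly M = det (diagonal μ - M)
  have hdet : ((Matrix.scalar _ μ) - M).det = 0 := by
    have : ((M.charmatrix).map (Polynomial.evalRingHom μ)) = (Matrix.scalar _ μ) - M := by
      ext i j
      by_cases hij : i = j <;>
        simp [Matrix.charmatrix_apply, Matrix.diagonal, hij, Matrix.scalar, Matrix.one_apply]
    calc ((Matrix.scalar _ μ) - M).det
        = ((M.charmatrix).map (Polynomial.evalRingHom μ)).det := by rw [this]
      _ = (Polynomial.evalRingHom μ) (M.charmatrix).det := ((Polynomial.evalRingHom μ).map_det _).symm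
      _ = 0 := heval
  have hMspec : μ ∈ spectrum ℝ M := by
    rw [spectrum.mem_iff]
    intro hu
    have : algebraMap ℝ (Matrix _ _ ℝ) μ - M = (Matrix.scalar _ μ) - M := rfl
    rw [this] at hu
    have := (Matrix.isUnit_iff_isUnit_det _).mp hu
    rw [hdet] at this
    exact (by simpa using this : ¬ IsUnit (0 : ℝ)) (by simpa using this)
  have : spectrum ℝ ((LinearMap.toMatrixAlgEquiv b) L) = spectrum ℝ L :=
    AlgEquiv.spectrum_eq (LinearMap.toMatrixAlgEquiv b) L
  rw [← this]
  exact hMspec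

/-- product over a multiset of linear factors is a unit if each factor is -/
private lemma isUnit_aeval_multiset (L : Module.End ℝ V) (s : Multiset ℝ)
    (h : ∀ r ∈ s, IsUnit (aeval L (X - C r))) :
    IsUnit (aeval L (s.map fun r => X - C r).prod) := by
  induction s using Multiset.induction with
  | empty => simp
  | cons r t ih =>
    rw [Multiset.map_cons, Multiset.prod_cons, map_mul]
    exact (h r (Multiset.mem_cons_self r t)).mul
      (ih fun x hx => h x (Multiset.mem_cons_of_mem hx))

/-- evaluation of a split polynomial with no root in the spectrum is a unit -/
private lemma isUnit_aeval_of_no_root_in_spectrum (L : Module.End ℝ V) (p : ℝ[X])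
    (hmonic : p.Monic) (hsplit : (p.map (RingHom.id ℝ)).Splits)
    (h : ∀ r ∈ p.roots, r ∉ spectrum ℝ L) : IsUnit (aeval L p) := by
  have hp : p = (p.roots.map fun r => X - C r).prod :=
    (by rw [Polynomial.map_id] at hsplit; exact hsplit.eq_prod_roots_of_monic hmonic)
  rw [hp]
  apply isUnit_aeval_multiset
  intro r hr
  have hnot := h r hr
  rw [spectrum.notMem_iff] at hnot
  have : aeval L (X - C r) = -(algebraMap ℝ (Module.End ℝ V) r - L) := by
    simp [map_sub]
  rw [this]
  exact hnot.neg

end Aux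

/-- gluing of nondegenerate symmetric bilinear forms along self-adjoint
endomorphisms with disjoint real spectra yields a symmetric nondegenerate form on the
direct sum, for which `L₁ ⊕ L₂` is self-adjoint. -/
theorem glued_form_symmetric_nondegenerate_selfadjoint
    {V₁ V₂ : Type*} [AddCommGroup V₁] [Module ℝ V₁] [FiniteDimensional ℝ V₁]
    [AddCommGroup V₂] [Module ℝ V₂] [FiniteDimensional ℝ V₂]
    (g₁ : V₁ →ₗ[ℝ] V₁ →ₗ[ℝ] ℝ) (g₂ : V₂ →ₗ[ℝ] V₂ →ₗ[ℝ] ℝ)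
    (hg₁sym : ∀ u v, g₁ u v = g₁ v u) (hg₂sym : ∀ u v, g₂ u v = g₂ v u)
    (hg₁nd : ∀ u, (∀ v, g₁ u v = 0) → u = 0)
    (hg₂nd : ∀ u, (∀ v, g₂ u v = 0) → u = 0)
    (L₁ : Module.End ℝ V₁) (L₂ : Module.End ℝ V₂)
    (hL₁sa : ∀ u v, g₁ (L₁ u) v = g₁ u (L₁ v))
    (hL₂sa : ∀ u v, g₂ (L₂ u) v = g₂ u (L₂ v))
    (hsplit₁ : Polynomial.Splits ((LinearMap.charpoly L₁).map (RingHom.id ℝ)))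
    (hsplit₂ : Polynomial.Splits ((LinearMap.charpoly L₂).map (RingHom.id ℝ)))
    (hdisj : Disjoint (spectrum ℝ L₁) (spectrum ℝ L₂))
    (G : V₁ × V₂ → V₁ × V₂ → ℝ)
    (hG : ∀ u v : V₁ × V₂, G u v =
      g₁ ((Polynomial.aeval L₁ (LinearMap.charpoly L₂)) u.1) v.1
        + g₂ ((Polynomial.aeval L₂ (LinearMap.charpoly L₁)) u.2) v.2) :
    (∀ u v, G u v = G v u) ∧
    (∀ u, (∀ v, G u v = 0) → u = 0) ∧
    (∀ u v : V₁ × V₂, G (L₁ u.1, L₂ u.2) v = G u (L₁ v.1, L₂ v.2)) := by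
  set A := Polynomial.aeval L₁ (LinearMap.charpoly L₂) with hA
  set B := Polynomial.aeval L₂ (LinearMap.charpoly L₁) with hB
  have hAsa : ∀ u v, g₁ (A u) v = g₁ u (A v) :=
    aeval_selfadj g₁ L₁ hL₁sa (LinearMap.charpoly L₂)
  have hBsa : ∀ u v, g₂ (B u) v = g₂ u (B v) :=
    aeval_selfadj g₂ L₂ hL₂sa (LinearMap.charpoly L₁)
  -- A and B are units
  have hAunit : IsUnit A := by
    apply isUnit_aeval_of_no_root_in_spectrum L₁ _ (LinearMap.charpoly_monic L₂) hsplit₂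
    intro r hr hmem
    have hr2 : r ∈ spectrum ℝ L₂ :=
      mem_spectrum_of_isRoot_charpoly L₂ (Polynomial.isRoot_of_mem_roots hr)
    exact Set.disjoint_left.mp hdisj hmem hr2
  have hBunit : IsUnit B := by
    apply isUnit_aeval_of_no_root_in_spectrum L₂ _ (LinearMap.charpoly_monic L₁) hsplit₁
    intro r hr hmem
    have hr1 : r ∈ spectrum ℝ L₁ :=
      mem_spectrum_of_isRoot_charpoly L₁ (Polynomial.isRoot_of_mem_roots hr)
    exact Set.disjoint_left.mp hdisj hr1 hmem
  have hAinj : Function.Injective A := ((Module.End.isUnit_iff A).mp hAunit).injective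
  have hBinj : Function.Injective B := ((Module.End.isUnit_iff B).mp hBunit).injective
  refine ⟨?_, ?_, ?_⟩
  · intro u v
    rw [hG u v, hG v u, hAsa u.1 v.1, hBsa u.2 v.2, hg₁sym, hg₂sym]
  · intro u hu
    have h1 : u.1 = 0 := by
      apply hAinj
      rw [map_zero]
      apply hg₁nd
      intro w
      have := hu (w, 0)
      rw [hG] at this
      simpa using this
    have h2 : u.2 = 0 := by
      apply hBinj
      rw [map_zero]
      apply hg₂nd
      intro w
      have := hu (0, w)
      rw [hG] at this
      simpa using this
    exact Prod.ext h1 h2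
  · intro u v
    rw [hG, hG]
    have hcomm₁ : A * L₁ = L₁ * A := by
      rw [hA, show L₁ * Polynomial.aeval L₁ (LinearMap.charpoly L₂)
          = Polynomial.aeval L₁ ((X : ℝ[X]) * LinearMap.charpoly L₂) by
            rw [map_mul, Polynomial.aeval_X],
        show Polynomial.aeval L₁ (LinearMap.charpoly L₂) * L₁
          = Polynomial.aeval L₁ (LinearMap.charpoly L₂ * (X : ℝ[X])) by
            rw [map_mul, Polynomial.aeval_X], mul_comm]
    have hcomm₂ : B * L₂ = L₂ * B := by
      rw [hB, show L₂ * Polynomial.aeval L₂ (LinearMap.charpoly L₁)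
          = Polynomial.aeval L₂ ((X : ℝ[X]) * LinearMap.charpoly L₁) by
            rw [map_mul, Polynomial.aeval_X],
        show Polynomial.aeval L₂ (LinearMap.charpoly L₁) * L₂
          = Polynomial.aeval L₂ (LinearMap.charpoly L₁ * (X : ℝ[X])) by
            rw [map_mul, Polynomial.aeval_X], mul_comm]
    have e1 : A (L₁ u.1) = L₁ (A u.1) := by
      have := congrArg (fun f : Module.End ℝ V₁ => f u.1) hcomm₁
      simpa [Module.End.mul_apply] using this
    have e2 : B (L₂ u.2) = L₂ (B u.2) := by
      have := congrArg (fun f : Module.End ℝ V₂ => f u.2) hcomm₂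
      simpa [Module.End.mul_apply] using this
    simp only [e1, e2]
    rw [hL₁sa (A u.1) v.1, hL₂sa (B u.2) v.2]
end
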